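/- Let f : ℝⁿ → ℝ be differentiable with locally Lipschitz gradient, and suppose grad f is strongly semismooth at x* (i.e., there exist C, δ > 0 with ‖grad f(x*) − grad f(y) − H_y(x* − y)‖ ≤ C‖x* − y‖² for all y ∈ B_δ(x*) and H_y in the Clarke generalized Jacobian of grad f at y). If moreover grad f(x*) = 0 and x_k → x* with Newton iterates x_{k+1} = x_k − H_k⁻¹ grad f(x_k) for H_k ∈ ∂(grad f)(x_k) with ‖H_k⁻¹‖ ≤ β uniformly, then ‖x_{k+1} − x*‖ ≤ βC ‖x_k − x*‖² for all large k. -/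
import Mathlib


/-- quadratic convergence of the semismooth Newton method in `ℝⁿ`
(modeled by a finite-dimensional real inner product space `E`).  If `G = grad f` is
strongly semismooth at `xs` (constants `C, δ`), `G xs = 0`, `x k → xs`, the Newton
iterates satisfy `x (k+1) = x k − H_k⁻¹ G (x k)` with `H_k ∈ ∂G(x k)` and
`‖H_k⁻¹‖ ≤ β` uniformly, then `‖x (k+1) − xs‖ ≤ β C ‖x k − xs‖²` for all large `k`. -/
theorem stmt_17
    {E : Type*} [NormedAddCommGroup E] [InnerProductSpace ℝ E] [FiniteDimensional ℝ E]
    (G : E → E) (DG : E → Set (E →L[ℝ] E)) (xs : E)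
    (C δ : ℝ) (hC : 0 < C) (hδ : 0 < δ)
    (hss : ∀ y ∈ Metric.ball xs δ, ∀ H ∈ DG y,
      ‖G xs - G y - H (xs - y)‖ ≤ C * ‖xs - y‖ ^ 2)
    (hG0 : G xs = 0)
    (x : ℕ → E) (Hk Hinv : ℕ → (E →L[ℝ] E))
    (hconv : Filter.Tendsto x Filter.atTop (nhds xs))
    (hH : ∀ k, Hk k ∈ DG (x k))
    (hHinv : ∀ k, ∀ v : E, Hinv k (Hk k v) = v ∧ Hk k (Hinv k v) = v)
    (β : ℝ) (hβ : 0 < β) (hβbound : ∀ k, ‖Hinv k‖ ≤ β)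
    (hnewton : ∀ k, x (k+1) = x k - Hinv k (G (x k))) :
    ∃ K : ℕ, ∀ k ≥ K, ‖x (k+1) - xs‖ ≤ β * C * ‖x k - xs‖ ^ 2 := by
  have hball : ∀ᶠ k in Filter.atTop, x k ∈ Metric.ball xs δ :=
    hconv (Metric.ball_mem_nhds xs hδ)
  rw [Filter.eventually_atTop] at hball
  obtain ⟨K, hK⟩ := hball
  refine ⟨K, fun k hk => ?_⟩
  have hxk := hK k hk
  have key : x (k+1) - xs = Hinv k (G xs - G (x k) - Hk k (xs - x k)) := by
    have h1 : Hinv k (Hk k (x k - xs)) = x k - xs := (hHinv k _).1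
    have h2 : x k - Hinv k (G (x k)) - xs = (x k - xs) - Hinv k (G (x k)) := by abel
    rw [hnewton k, h2, ← h1, ← map_sub]
    congr 1
    rw [hG0]
    simp [map_sub]
    abel
  rw [key]
  calc ‖Hinv k (G xs - G (x k) - Hk k (xs - x k))‖
      ≤ ‖Hinv k‖ * ‖G xs - G (x k) - Hk k (xs - x k)‖ := (Hinv k).le_opNorm _
    _ ≤ β * (C * ‖xs - x k‖ ^ 2) := by
        apply mul_le_mul (hβbound k) ?_ (norm_nonneg _) hβ.le
        exact hss (x k) hxk (Hk k) (hH k)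
    _ = β * C * ‖x k - xs‖ ^ 2 := by rw [norm_sub_rev]; ring
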